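/- Let W be a Markov generator and, for q ∈ ℝ, let M(q) be the tilted matrix obtained from W by replacing the off-diagonal entries W_{12}, W_{21} with W_{12} e^{−q}, W_{21} e^{q} respectively (diagonal unchanged). Let F̃ = log(W_{12} p^st_2/(W_{21} p^st_1)) and W̃ the HTR generator. Then W̃ = P_st M(F̃)ᵀ P_st⁻¹. -/

import Mathlib

/-- Theorem 4, Eq. S33: the HTR generator equals the
`Pst`-conjugated transpose of the tilted matrix evaluated at the effective
affinity: `W̃ = Pst M(F̃)ᵀ Pst⁻¹`, where `M(q)` replaces the entries `W₁₂, W₂₁`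
by `W₁₂ e^{−q}, W₂₁ e^{q}` and `F̃ = log(W₁₂ pst₂/(W₂₁ pst₁))`.
States `1,2` are indices `0,1`. -/
theorem HTR_eq_tilted_conjugate {m : ℕ}
    (W Wst : Matrix (Fin (m + 3)) (Fin (m + 3)) ℝ)
    (hoff : ∀ i j : Fin (m + 3), i ≠ j → 0 ≤ W i j)
    (hcol : ∀ j : Fin (m + 3), ∑ i : Fin (m + 3), W i j = 0)
    (h12pos : 0 < W 0 1) (h21pos : 0 < W 1 0)
    (h12 : Wst 0 1 = 0) (h21 : Wst 1 0 = 0)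
    (h11 : Wst 0 0 = W 0 0 + W 1 0) (h22 : Wst 1 1 = W 1 1 + W 0 1)
    (hother : ∀ i j : Fin (m + 3),
      ¬((i = 0 ∧ j = 1) ∨ (i = 1 ∧ j = 0) ∨ (i = 0 ∧ j = 0) ∨ (i = 1 ∧ j = 1)) →
      Wst i j = W i j)
    (pst : Fin (m + 3) → ℝ) (hpst : ∀ i, 0 < pst i)
    (hsteady : Wst.mulVec pst = 0)
    (M : ℝ → Matrix (Fin (m + 3)) (Fin (m + 3)) ℝ)
    (hM : ∀ q, M q = Matrix.of fun i j =>
      if i = 0 ∧ j = 1 then W 0 1 * Real.exp (-q)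
      else if i = 1 ∧ j = 0 then W 1 0 * Real.exp q
      else W i j) :
    W - Wst + Matrix.diagonal pst * Wst.transpose *
        Matrix.diagonal (fun i => (pst i)⁻¹) =
      Matrix.diagonal pst *
        (M (Real.log (W 0 1 * pst 1 / (W 1 0 * pst 0)))).transpose *
        Matrix.diagonal (fun i => (pst i)⁻¹) := by
  have hp0 : (pst 0) ≠ 0 := (hpst 0).ne'
  have hp1 : (pst 1) ≠ 0 := (hpst 1).ne'
  have hW10 : W 1 0 ≠ 0 := h21pos.ne'
  have hW01 : W 0 1 ≠ 0 := h12pos.ne'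
  have h01 : (0 : Fin (m + 3)) ≠ 1 := by simp [Fin.ext_iff]
  have h10 : (1 : Fin (m + 3)) ≠ 0 := h01.symm
  have hpos : 0 < W 0 1 * pst 1 / (W 1 0 * pst 0) :=
    div_pos (mul_pos h12pos (hpst 1)) (mul_pos h21pos (hpst 0))
  set F := Real.log (W 0 1 * pst 1 / (W 1 0 * pst 0)) with hF
  have hexp : Real.exp F = W 0 1 * pst 1 / (W 1 0 * pst 0) := Real.exp_log hpos
  have hexpn : Real.exp (-F) = W 1 0 * pst 0 / (W 0 1 * pst 1) := by
    rw [Real.exp_neg, hexp, inv_div]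
  ext i j
  simp only [Matrix.add_apply, Matrix.sub_apply, Matrix.mul_diagonal,
    Matrix.diagonal_mul, Matrix.transpose_apply, hM, Matrix.of_apply]
  by_cases hi0 : i = 0
  · by_cases hj1 : j = 1
    · subst hi0 hj1
      simp only [h12, h21, h10, and_true, true_and, if_false, if_true, hexp]
      field_simp
      simp only [h01, h10, false_and, and_false, if_false, and_true, true_and]
      field_simp
      ring
    · by_cases hj0 : j = 0
      · subst hi0 hj0
        simp only [h01, and_false, false_and, if_false, and_true]
        field_simp
        ring
      · subst hi0
        have hWst1 : Wst 0 j = W 0 j := hother 0 j (by tauto)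
        have hWst2 : Wst j 0 = W j 0 := hother j 0 (by tauto)
        simp only [hj0, hj1, and_true, and_false, false_and, if_false, hWst1, hWst2]
        ring
  · by_cases hi1 : i = 1
    · by_cases hj0 : j = 0
      · subst hi1 hj0
        simp only [h12, h21, h01, h10, and_true, true_and, and_false, false_and,
          if_false, if_true, hexpn]
        field_simp
        ring
      · by_cases hj1 : j = 1
        · subst hi1 hj1
          simp only [h01, h10, and_false, false_and, and_true, if_false]
          field_simp
          ring
        · subst hi1
          have hWst1 : Wst 1 j = W 1 j := hother 1 j (by tauto)
          have hWst2 : Wst j 1 = W j 1 := hother j 1 (by tauto)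
          simp only [hj0, hj1, and_true, and_false, false_and, if_false, hWst1, hWst2]
          ring
    · have hWst1 : Wst i j = W i j := hother i j (by tauto)
      have hWst2 : Wst j i = W j i := hother j i (by tauto)
      simp only [hi0, hi1, and_true, and_false, if_false, hWst1, hWst2]
      ring
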